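/- Let π₁ and π₂ be two 2-dimensional subspaces of ℝ⁴ with orthonormal bases {a,b} and {c/|c|, d/|c|} respectively, where a = (1,0,0,0), b = (0,1,0,0), c = (c₁,c₂,c₃,c₄), d = (−c₂,c₁,d₃,d₄), |c| = |d| ≠ 0, c·d = 0. Then π₁ and π₂ are isoclinic: for all nonzero v ∈ π₂, the quantity |P v|/|v|, where P is the orthogonal projection onto π₁, is constant. -/

import Mathlib

open scoped RealInnerProductSpace

set_option maxHeartbeats 1000000 in
/-- Corollary 1.4, n ≥ 4: the planes `π₁ = span{a,b}` and
`π₂ = span{c/|c|, d/|c|}` in ℝ⁴ are isoclinic: the ratio `|P v|/|v|`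
(with `P` the orthogonal projection onto `π₁`) is the same for all
nonzero `v ∈ π₂`. -/
theorem stmt4 (a b c d : EuclideanSpace ℝ (Fin 4))
    (ha0 : a 0 = 1) (ha1 : a 1 = 0) (ha2 : a 2 = 0) (ha3 : a 3 = 0)
    (hb0 : b 0 = 0) (hb1 : b 1 = 1) (hb2 : b 2 = 0) (hb3 : b 3 = 0)
    (hd0 : d 0 = -(c 1)) (hd1 : d 1 = c 0)
    (hnorm : ‖c‖ = ‖d‖) (hc : ‖c‖ ≠ 0) (hcd : ⟪c, d⟫ = 0) :
    ∃ k : ℝ, ∀ v ∈ Submodule.span ℝ ({‖c‖⁻¹ • c, ‖c‖⁻¹ • d} :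
        Set (EuclideanSpace ℝ (Fin 4))), v ≠ 0 →
      ‖(Submodule.orthogonalProjection (Submodule.span ℝ ({a, b} :
          Set (EuclideanSpace ℝ (Fin 4)))) v : EuclideanSpace ℝ (Fin 4))‖ / ‖v‖ = k := by
  classical
  have hinner : ∀ x y : EuclideanSpace ℝ (Fin 4),
      ⟪x, y⟫ = x 0 * y 0 + x 1 * y 1 + x 2 * y 2 + x 3 * y 3 := by
    intro x y
    simp [PiLp.inner_apply, Fin.sum_univ_four, RCLike.inner_apply]; ring
  have hnormsq : ∀ x : EuclideanSpace ℝ (Fin 4),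
      ‖x‖ ^ 2 = x 0 ^ 2 + x 1 ^ 2 + x 2 ^ 2 + x 3 ^ 2 := by
    intro x
    rw [← real_inner_self_eq_norm_sq, hinner]; ring
  set U : Submodule ℝ (EuclideanSpace ℝ (Fin 4)) :=
    Submodule.span ℝ ({a, b} : Set (EuclideanSpace ℝ (Fin 4))) with hU
  have hproj : ∀ v : EuclideanSpace ℝ (Fin 4),
      ((Submodule.orthogonalProjection U v : EuclideanSpace ℝ (Fin 4))) = v 0 • a + v 1 • b := by
    intro v
    rw [← Submodule.starProjection_apply]
    apply Submodule.eq_starProjection_of_mem_of_inner_eq_zero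
    · exact Submodule.add_mem _
        (Submodule.smul_mem _ _ (Submodule.subset_span (by simp)))
        (Submodule.smul_mem _ _ (Submodule.subset_span (by simp)))
    · intro w hw
      rw [hU, Submodule.mem_span_pair] at hw
      obtain ⟨x, y, rfl⟩ := hw
      rw [hinner]
      simp only [PiLp.add_apply, PiLp.sub_apply, PiLp.smul_apply, smul_eq_mul,
        ha0, ha1, ha2, ha3, hb0, hb1, hb2, hb3]
      ring
  -- facts about c and d
  have hc2 : c 0 ^ 2 + c 1 ^ 2 + c 2 ^ 2 + c 3 ^ 2 = ‖c‖ ^ 2 := (hnormsq c).symm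
  have hd2 : d 0 ^ 2 + d 1 ^ 2 + d 2 ^ 2 + d 3 ^ 2 = ‖c‖ ^ 2 := by
    rw [hnorm]; exact (hnormsq d).symm
  have hcd' : c 0 * d 0 + c 1 * d 1 + c 2 * d 2 + c 3 * d 3 = 0 := by
    rw [← hinner]; exact hcd
  refine ⟨Real.sqrt (c 0 ^ 2 + c 1 ^ 2) / ‖c‖, ?_⟩
  intro v hv hv0
  rw [Submodule.mem_span_pair] at hv
  obtain ⟨s, t, rfl⟩ := hv
  set v : EuclideanSpace ℝ (Fin 4) := s • ‖c‖⁻¹ • c + t • ‖c‖⁻¹ • d with hvdef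
  have hventry : ∀ i : Fin 4, v i = ‖c‖⁻¹ * (s * c i + t * d i) := by
    intro i
    simp only [hvdef, PiLp.add_apply, PiLp.smul_apply, smul_eq_mul]
    ring
  have hvnsq : ‖v‖ ^ 2 = s ^ 2 + t ^ 2 := by
    rw [hnormsq, hventry, hventry, hventry, hventry]
    have h1 : ‖c‖⁻¹ * ‖c‖ = 1 := inv_mul_cancel₀ hc
    linear_combination ((‖c‖⁻¹) ^ 2 * s ^ 2) * hc2 + (2 * s * t * (‖c‖⁻¹) ^ 2) * hcd' +
      ((‖c‖⁻¹) ^ 2 * t ^ 2) * hd2 + ((s ^ 2 + t ^ 2) * (‖c‖⁻¹ * ‖c‖ + 1)) * h1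
  have hst : s ^ 2 + t ^ 2 ≠ 0 := by
    rw [← hvnsq]
    exact pow_ne_zero 2 (norm_ne_zero_iff.mpr hv0)
  have hstpos : 0 < s ^ 2 + t ^ 2 := lt_of_le_of_ne (by positivity) (Ne.symm hst)
  have hpnsq : ‖(Submodule.orthogonalProjection U v : EuclideanSpace ℝ (Fin 4))‖ ^ 2
      = (s ^ 2 + t ^ 2) * (c 0 ^ 2 + c 1 ^ 2) / ‖c‖ ^ 2 := by
    rw [hproj, hnormsq]
    simp only [PiLp.add_apply, PiLp.smul_apply, smul_eq_mul,
      ha0, ha1, ha2, ha3, hb0, hb1, hb2, hb3, hventry, hd0, hd1]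
    field_simp
    ring
  -- compare squares
  have hcnn : (0:ℝ) < ‖c‖ := lt_of_le_of_ne (norm_nonneg c) (Ne.symm hc)
  have hratio_sq : (‖(Submodule.orthogonalProjection U v : EuclideanSpace ℝ (Fin 4))‖ / ‖v‖) ^ 2
      = (Real.sqrt (c 0 ^ 2 + c 1 ^ 2) / ‖c‖) ^ 2 := by
    rw [div_pow, div_pow, hpnsq, hvnsq, Real.sq_sqrt (by positivity)]
    field_simp
  have h1 : (0:ℝ) ≤ ‖(Submodule.orthogonalProjection U v : EuclideanSpace ℝ (Fin 4))‖ / ‖v‖ := by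
    positivity
  have h2 : (0:ℝ) ≤ Real.sqrt (c 0 ^ 2 + c 1 ^ 2) / ‖c‖ := by positivity
  calc ‖(Submodule.orthogonalProjection U v : EuclideanSpace ℝ (Fin 4))‖ / ‖v‖
      = Real.sqrt ((‖(Submodule.orthogonalProjection U v : EuclideanSpace ℝ (Fin 4))‖ / ‖v‖) ^ 2) :=
        (Real.sqrt_sq h1).symm
    _ = Real.sqrt ((Real.sqrt (c 0 ^ 2 + c 1 ^ 2) / ‖c‖) ^ 2) := by rw [hratio_sq]
    _ = Real.sqrt (c 0 ^ 2 + c 1 ^ 2) / ‖c‖ := Real.sqrt_sq h2
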